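/- arXiv:2509.17603 — 3 statements merged into one kernel-verified Lean document; each statement's English description precedes it below -/
import Mathlib

section
/- Let h be analytic on the unit disk with h(0) = 0, h'(0) = 1, and suppose that for every ζ ∈ 𝔻, |(1-|ζ|²) h''(ζ)/h'(ζ) - 2 conj(ζ)| ≤ 2γ for some constant γ ≥ 1. Then |h'(ζ)| ≤ (1+|ζ|)^{γ-1} / (1-|ζ|)^{γ+1} for all ζ ∈ 𝔻. -/
open Complex Metric

theorem deriv_growth_of_second_coeff_bound (h : ℂ → ℂ)
    (hh : DifferentiableOn ℂ h (ball (0 : ℂ) 1))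
    (h0 : h 0 = 0) (h1 : deriv h 0 = 1)
    (hne : ∀ ζ ∈ ball (0 : ℂ) 1, deriv h ζ ≠ 0)
    (γ : ℝ) (hγ : 1 ≤ γ)
    (hA : ∀ ζ ∈ ball (0 : ℂ) 1,
      ‖(1 - (‖ζ‖ : ℂ) ^ 2) * (deriv (deriv h) ζ / deriv h ζ) - 2 * (starRingEnd ℂ) ζ‖ ≤ 2 * γ) :
    ∀ ζ ∈ ball (0 : ℂ) 1,
      ‖deriv h ζ‖ ≤ (1 + ‖ζ‖) ^ (γ - 1) / (1 - ‖ζ‖) ^ (γ + 1) := by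
  have han : AnalyticOnNhd ℂ h (ball 0 1) := hh.analyticOnNhd isOpen_ball
  have han1 : AnalyticOnNhd ℂ (deriv h) (ball 0 1) := han.deriv
  -- pointwise bound on h''/h'
  have hratio : ∀ z ∈ ball (0:ℂ) 1,
      ‖deriv (deriv h) z / deriv h z‖ ≤ (2*γ + 2*‖z‖) / (1 - ‖z‖^2) := by
    intro z hz
    have hz1 : ‖z‖ < 1 := by simpa using hz
    have hpos : (0:ℝ) < 1 - ‖z‖^2 := by nlinarith [norm_nonneg z]
    have hcoef : ‖(1 - (‖z‖ : ℂ) ^ 2)‖ = 1 - ‖z‖^2 := by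
      have : (1 - (‖z‖ : ℂ) ^ 2) = ((1 - ‖z‖^2 : ℝ) : ℂ) := by push_cast; ring
      rw [this, Complex.norm_real, Real.norm_eq_abs, abs_of_pos hpos]
    have htri : (1 - ‖z‖^2) * ‖deriv (deriv h) z / deriv h z‖ ≤ 2*γ + 2*‖z‖ := by
      have h1 := hA z hz
      have h2 : ‖(1 - (‖z‖ : ℂ) ^ 2) * (deriv (deriv h) z / deriv h z)‖
          ≤ ‖(1 - (‖z‖ : ℂ) ^ 2) * (deriv (deriv h) z / deriv h z) - 2 * (starRingEnd ℂ) z‖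
            + ‖2 * (starRingEnd ℂ) z‖ := by
        have := norm_add_le ((1 - (‖z‖ : ℂ) ^ 2) * (deriv (deriv h) z / deriv h z)
          - 2 * (starRingEnd ℂ) z) (2 * (starRingEnd ℂ) z)
        simpa using this
      rw [norm_mul, hcoef] at h2
      have h3 : ‖2 * (starRingEnd ℂ) z‖ = 2 * ‖z‖ := by
        simp [norm_mul]
      linarith
    rw [le_div_iff₀ hpos]
    linarith [htri]
  intro ζ hζ
  set r : ℝ := ‖ζ‖ with hrdef
  have hr1 : r < 1 := by simpa using hζ
  have hr0 : (0:ℝ) ≤ r := norm_nonneg ζ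
  have hmem : ∀ t ∈ Set.Icc (0:ℝ) 1, (t:ℂ) * ζ ∈ ball (0:ℂ) 1 := by
    intro t ht
    simp only [mem_ball, dist_zero_right, norm_mul, Complex.norm_real, Real.norm_eq_abs]
    calc |t| * r ≤ 1 * r := by
          apply mul_le_mul_of_nonneg_right _ hr0
          rw [_root_.abs_of_nonneg ht.1]; exact ht.2
      _ < 1 := by rwa [one_mul]
  set g : ℝ → ℂ := fun t => deriv h ((t:ℂ) * ζ) with hgdef
  have hgd : ∀ t ∈ Set.Icc (0:ℝ) 1,
      HasDerivAt g (ζ • deriv (deriv h) ((t:ℂ)*ζ)) t := by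
    intro t ht
    have hc : HasDerivAt (fun s : ℝ => (s : ℂ) * ζ) ζ t := by
      simpa using (Complex.ofRealCLM.hasDerivAt (x := t)).mul_const ζ
    have hd : HasDerivAt (deriv h) (deriv (deriv h) ((t:ℂ)*ζ)) ((t:ℂ)*ζ) :=
      ((han1 _ (hmem t ht)).differentiableAt).hasDerivAt
    exact hd.scomp t hc
  have hgne : ∀ t ∈ Set.Icc (0:ℝ) 1, g t ≠ 0 := fun t ht => hne _ (hmem t ht)
  -- the comparison function
  set ψ : ℝ → ℝ := fun t =>
    (γ-1) * Real.log (1 + t*r) - (γ+1) * Real.log (1 - t*r)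
      - (1/2) * Real.log (‖g t‖^2) with hψdef
  have key : ∀ t ∈ Set.Icc (0:ℝ) 1, ∃ d, HasDerivAt ψ d t ∧ 0 ≤ d := by
    intro t ht
    have htr0 : 0 ≤ t*r := mul_nonneg ht.1 hr0
    have htr1 : t*r < 1 := lt_of_le_of_lt (by nlinarith [ht.1, ht.2]) hr1
    have hp1 : (0:ℝ) < 1 + t*r := by linarith
    have hp2 : (0:ℝ) < 1 - t*r := by linarith
    have hl1 : HasDerivAt (fun s : ℝ => 1 + s*r) r t := by
      simpa using ((hasDerivAt_id t).mul_const r).const_add 1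
    have hl2 : HasDerivAt (fun s : ℝ => 1 - s*r) (-r) t := by
      simpa using ((hasDerivAt_id t).mul_const r).const_sub 1
    have hlog1 : HasDerivAt (fun s : ℝ => Real.log (1 + s*r)) (r / (1+t*r)) t :=
      hl1.log (ne_of_gt hp1)
    have hlog2 : HasDerivAt (fun s : ℝ => Real.log (1 - s*r)) ((-r) / (1-t*r)) t :=
      hl2.log (ne_of_gt hp2)
    have hgt := hgd t ht
    have hu : HasDerivAt (fun s => ‖g s‖^2)
        (2 * inner ℝ (g t) (ζ • deriv (deriv h) ((t:ℂ)*ζ))) t := hgt.norm_sq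
    have hune : ‖g t‖^2 ≠ 0 := pow_ne_zero _ (norm_ne_zero_iff.mpr (hgne t ht))
    have hlogu : HasDerivAt (fun s => Real.log (‖g s‖^2))
        (2 * inner ℝ (g t) (ζ • deriv (deriv h) ((t:ℂ)*ζ)) / ‖g t‖^2) t := hu.log hune
    set I : ℝ := inner ℝ (g t) (ζ • deriv (deriv h) ((t:ℂ)*ζ)) with hI
    refine ⟨(γ-1) * (r/(1+t*r)) - (γ+1) * ((-r)/(1-t*r)) - (1/2) * (2 * I / ‖g t‖^2),
      ((hlog1.const_mul _).sub (hlog2.const_mul _)).sub (hlogu.const_mul _), ?_⟩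
    -- now the nonnegativity
    have hgpos : 0 < ‖g t‖ := norm_pos_iff.mpr (hgne t ht)
    have hIle : I ≤ ‖g t‖ * ‖ζ • deriv (deriv h) ((t:ℂ)*ζ)‖ :=
      real_inner_le_norm _ _
    have hnormζ : ‖ζ • deriv (deriv h) ((t:ℂ)*ζ)‖ = r * ‖deriv (deriv h) ((t:ℂ)*ζ)‖ := by
      rw [norm_smul]
    have hs : ‖(t:ℂ)*ζ‖ = t*r := by
      rw [norm_mul, Complex.norm_real, Real.norm_eq_abs, _root_.abs_of_nonneg ht.1]
    have hrat := hratio _ (hmem t ht)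
    rw [hs] at hrat
    have hratio2 : ‖deriv (deriv h) ((t:ℂ)*ζ)‖ / ‖g t‖ ≤ (2*γ + 2*(t*r)) / (1 - (t*r)^2) := by
      rw [← norm_div]; exact hrat
    set K : ℝ := (2*γ + 2*(t*r)) / (1 - (t*r)^2) with hK
    have hppos : (0:ℝ) < 1 - (t*r)^2 := by nlinarith
    have hK0 : 0 ≤ K := div_nonneg (by nlinarith) hppos.le
    have hDle : ‖deriv (deriv h) ((t:ℂ)*ζ)‖ ≤ K * ‖g t‖ := (div_le_iff₀ hgpos).mp hratio2
    have hIbound : I / ‖g t‖^2 ≤ r * K := by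
      rw [div_le_iff₀ (by positivity)]
      calc I ≤ ‖g t‖ * (r * ‖deriv (deriv h) ((t:ℂ)*ζ)‖) := by rw [← hnormζ]; exact hIle
        _ ≤ ‖g t‖ * (r * (K * ‖g t‖)) := by
            apply mul_le_mul_of_nonneg_left _ hgpos.le
            exact mul_le_mul_of_nonneg_left hDle hr0
        _ = r * K * ‖g t‖^2 := by ring
    have heq : (γ-1) * (r/(1+t*r)) - (γ+1) * ((-r)/(1-t*r))
        = r * K := by
      rw [hK]
      have h12 : (1:ℝ) - (t*r)^2 = (1+t*r) * (1-t*r) := by ring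
      rw [h12]
      rw [← mul_div_mul_right r (1+t*r) hp2.ne', ← mul_div_mul_left (-r) (1-t*r) hp1.ne']
      ring
    rw [heq]
    have : (1/2 : ℝ) * (2 * I / ‖g t‖^2) = I / ‖g t‖^2 := by ring
    rw [this]
    linarith
  -- monotonicity
  have hcont : ContinuousOn ψ (Set.Icc 0 1) := by
    intro t ht
    obtain ⟨d, hd, _⟩ := key t ht
    exact hd.continuousAt.continuousWithinAt
  have hmono : MonotoneOn ψ (Set.Icc 0 1) := by
    apply monotoneOn_of_deriv_nonneg (convex_Icc 0 1) hcont
    · intro t ht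
      rw [interior_Icc] at ht
      obtain ⟨d, hd, _⟩ := key t (Set.mem_Icc_of_Ioo ht)
      exact hd.differentiableAt.differentiableWithinAt
    · intro t ht
      rw [interior_Icc] at ht
      obtain ⟨d, hd, hd0⟩ := key t (Set.mem_Icc_of_Ioo ht)
      rw [hd.deriv]; exact hd0
  have h01 : ψ 0 ≤ ψ 1 := hmono (Set.mem_Icc.mpr ⟨le_refl _, zero_le_one⟩)
    (Set.mem_Icc.mpr ⟨zero_le_one, le_refl _⟩) zero_le_one
  have hg0 : g 0 = 1 := by simp [hgdef, h1]
  have hg1 : g 1 = deriv h ζ := by simp [hgdef]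
  have hψ0 : ψ 0 = 0 := by simp [hψdef, hg0]
  have hψ1 : ψ 1 = (γ-1) * Real.log (1 + r) - (γ+1) * Real.log (1 - r)
      - Real.log ‖deriv h ζ‖ := by
    have hpos : 0 < ‖deriv h ζ‖ := norm_pos_iff.mpr (hne ζ hζ)
    simp only [hψdef, hg1, one_mul]
    rw [Real.log_pow]
    push_cast
    ring
  rw [hψ0, hψ1] at h01
  have hlog : Real.log ‖deriv h ζ‖ ≤ (γ-1) * Real.log (1 + r) - (γ+1) * Real.log (1 - r) := by
    linarith
  have hp1 : (0:ℝ) < 1 + r := by linarith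
  have hp2 : (0:ℝ) < 1 - r := by linarith
  have hrhs : (1 + r) ^ (γ - 1) / (1 - r) ^ (γ + 1)
      = Real.exp ((γ-1) * Real.log (1 + r) - (γ+1) * Real.log (1 - r)) := by
    rw [Real.rpow_def_of_pos hp1, Real.rpow_def_of_pos hp2, ← Real.exp_sub]
    ring_nf
  rw [hrhs]
  calc ‖deriv h ζ‖ = Real.exp (Real.log ‖deriv h ζ‖) := by
        rw [Real.exp_log (norm_pos_iff.mpr (hne ζ hζ))]
    _ ≤ _ := Real.exp_le_exp.mpr hlog
end

section
/- Let h, g be analytic on the unit disk with |h'(ζ)| ≤ (1+|ζ|)^{γ-1}/(1-|ζ|)^{γ+1} and |g'(ζ)| ≤ ((K-1)/(K+1)) (1+|ζ|)^{γ-1}/(1-|ζ|)^{γ+1} for all ζ, where γ ≥ 1, K ≥ 1. If f = h + conj(g) with f(0)=0, then |f(z)| ≤ (K/(γ(1+K))) [((1+|z|)/(1-|z|))^γ - 1] for all z in the disk. -/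
open Complex Metric

lemma hasDerivAt_aux (γ : ℝ) (s : ℝ) (hs0 : 0 ≤ s) (hs1 : s < 1) :
    HasDerivAt (fun u : ℝ => ((1+u)/(1-u)) ^ γ)
      (2*γ*((1+s) ^ (γ-1)/(1-s) ^ (γ+1))) s := by
  have hpos1 : (0:ℝ) < 1 - s := by linarith
  have hpos2 : (0:ℝ) < 1 + s := by linarith
  have h1 : HasDerivAt (fun u : ℝ => (1+u)/(1-u)) (2/(1-s)^2) s := by
    have hnum : HasDerivAt (fun u : ℝ => 1 + u) 1 s := by
      simpa using (hasDerivAt_id s).const_add 1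
    have hden : HasDerivAt (fun u : ℝ => 1 - u) (-1) s := by
      simpa using (hasDerivAt_id s).const_sub 1
    have := hnum.div hden hpos1.ne'
    refine this.congr_deriv ?_
    ring
  have h2 := h1.rpow_const (p := γ) (Or.inl (by positivity))
  convert h2 using 1
  have e1 : ((1+s)/(1-s)) ^ (γ-1) = (1+s) ^ (γ-1) * ((1-s) ^ (γ-1))⁻¹ := by
    rw [Real.div_rpow hpos2.le hpos1.le, div_eq_mul_inv]
  have e2 : (1-s) ^ (γ+1) = (1-s) ^ (γ-1) * (1-s)^(2:ℕ) := by
    rw [← Real.rpow_natCast (1-s) 2, ← Real.rpow_add hpos1]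
    congr 1
    push_cast
    ring
  rw [e1, e2]
  have n1 : (1-s) ^ (γ-1) ≠ 0 := (Real.rpow_pos_of_pos hpos1 _).ne'
  have n2 : ((1-s):ℝ)^(2:ℕ) ≠ 0 := pow_ne_zero _ hpos1.ne'
  generalize (1+s) ^ (γ-1) = A
  generalize hBv : (1-s) ^ (γ-1) = Bv at n1 ⊢
  field_simp

lemma radial_bound (u : ℂ → ℂ) (hu : DifferentiableOn ℂ u (ball (0:ℂ) 1)) (hu0 : u 0 = 0)
    (γ c : ℝ) (hγ : 1 ≤ γ) (hc : 0 ≤ c)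
    (hud : ∀ ζ ∈ ball (0:ℂ) 1, ‖deriv u ζ‖ ≤ c * ((1+‖ζ‖) ^ (γ-1)/(1-‖ζ‖) ^ (γ+1)))
    (z : ℂ) (hz : z ∈ ball (0:ℂ) 1) :
    ‖u z‖ ≤ c * (1/(2*γ)) * (((1+‖z‖)/(1-‖z‖)) ^ γ - 1) := by
  have hγ0 : (0:ℝ) < γ := by linarith
  set r : ℝ := ‖z‖ with hr
  have hr0 : 0 ≤ r := norm_nonneg z
  have hr1 : r < 1 := by simpa [hr] using mem_ball_zero_iff.mp hz
  -- the radial path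
  have hmem : ∀ t ∈ Set.Icc (0:ℝ) 1, ((t:ℂ) * z) ∈ ball (0:ℂ) 1 := by
    intro t ht
    rw [mem_ball_zero_iff, norm_mul, Complex.norm_real, Real.norm_of_nonneg ht.1]
    calc t * r ≤ 1 * r := by nlinarith [ht.2]
      _ < 1 := by simpa using hr1
  have hψ : ∀ t : ℝ, HasDerivAt (fun t : ℝ => (t:ℂ) * z) z t := by
    intro t
    simpa using (Complex.ofRealCLM.hasDerivAt (x := t)).mul_const z
  have hφ : ∀ t ∈ Set.Icc (0:ℝ) 1,
      HasDerivAt (fun t : ℝ => u ((t:ℂ)*z)) (deriv u ((t:ℂ)*z) * z) t := by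
    intro t ht
    have hdu : DifferentiableAt ℂ u ((t:ℂ)*z) :=
      hu.differentiableAt (isOpen_ball.mem_nhds (hmem t ht))
    exact hdu.hasDerivAt.comp t (hψ t)
  -- continuity of the integrand
  have han : AnalyticOnNhd ℂ u (ball (0:ℂ) 1) := hu.analyticOnNhd isOpen_ball
  have hcont : ContinuousOn (fun t : ℝ => deriv u ((t:ℂ)*z) * z) (Set.Icc 0 1) := by
    apply ContinuousOn.mul _ continuousOn_const
    exact (han.deriv.continuousOn).comp
      (by continuity : Continuous (fun t : ℝ => (t:ℂ)*z)).continuousOn hmem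
  have hint : IntervalIntegrable (fun t : ℝ => deriv u ((t:ℂ)*z) * z)
      MeasureTheory.volume 0 1 :=
    (hcont.mono (by rw [Set.uIcc_of_le (by norm_num : (0:ℝ) ≤ 1)])).intervalIntegrable
  have hftc : u z - u 0 = ∫ t in (0:ℝ)..1, deriv u ((t:ℂ)*z) * z := by
    have := intervalIntegral.integral_eq_sub_of_hasDerivAt
      (f := fun t : ℝ => u ((t:ℂ)*z))
      (by intro t ht
          exact hφ t (by rwa [Set.uIcc_of_le (by norm_num : (0:ℝ) ≤ 1)] at ht)) hint
    simpa using this.symm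
  -- the bound function and its antiderivative
  set B : ℝ → ℝ := fun t => c * ((1+t*r) ^ (γ-1)/(1-t*r) ^ (γ+1)) * r with hB
  have hGd : ∀ t ∈ Set.Icc (0:ℝ) 1,
      HasDerivAt (fun t : ℝ => c * (1/(2*γ)) * ((1+t*r)/(1-t*r)) ^ γ) (B t) t := by
    intro t ht
    have hs0 : 0 ≤ t * r := mul_nonneg ht.1 hr0
    have hs1 : t * r < 1 := lt_of_le_of_lt (by nlinarith [ht.2]) hr1
    have h1 := (hasDerivAt_aux γ (t*r) hs0 hs1).comp t ((hasDerivAt_id t).mul_const r)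
    have h2 := h1.const_mul (c * (1/(2*γ)))
    refine h2.congr_deriv ?_
    · simp only [hB]
      generalize (1+t*r) ^ (γ-1)/(1-t*r) ^ (γ+1) = W
      field_simp [hγ0.ne']
  have hBcont : ContinuousOn B (Set.Icc 0 1) := by
    apply ContinuousOn.mul _ continuousOn_const
    apply continuousOn_const.mul
    apply ContinuousOn.div
    · apply ContinuousOn.rpow_const
      · fun_prop
      · intro t ht
        have hs0 : 0 ≤ t * r := mul_nonneg ht.1 hr0
        exact Or.inr (by linarith)
    · apply ContinuousOn.rpow_const
      · fun_prop
      · intro t ht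
        exact Or.inr (by linarith)
    · intro t ht
      have hs1 : t * r < 1 := lt_of_le_of_lt (by nlinarith [ht.1, ht.2]) hr1
      exact (Real.rpow_pos_of_pos (by linarith) _).ne'
  have hBint : IntervalIntegrable B MeasureTheory.volume 0 1 :=
    (hBcont.mono (by rw [Set.uIcc_of_le (by norm_num : (0:ℝ) ≤ 1)])).intervalIntegrable
  have hBval : (∫ t in (0:ℝ)..1, B t)
      = c * (1/(2*γ)) * (((1+r)/(1-r)) ^ γ - 1) := by
    have := intervalIntegral.integral_eq_sub_of_hasDerivAt
      (f := fun t : ℝ => c * (1/(2*γ)) * ((1+t*r)/(1-t*r)) ^ γ)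
      (by intro t ht
          exact hGd t (by rwa [Set.uIcc_of_le (by norm_num : (0:ℝ) ≤ 1)] at ht)) hBint
    rw [this]
    norm_num [Real.rpow_natCast]
    ring
  -- put it together
  calc ‖u z‖ = ‖u z - u 0‖ := by rw [hu0, sub_zero]
    _ = ‖∫ t in (0:ℝ)..1, deriv u ((t:ℂ)*z) * z‖ := by rw [hftc]
    _ ≤ ∫ t in (0:ℝ)..1, ‖deriv u ((t:ℂ)*z) * z‖ :=
        intervalIntegral.norm_integral_le_integral_norm (by norm_num)
    _ ≤ ∫ t in (0:ℝ)..1, B t := by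
        apply intervalIntegral.integral_mono_on (by norm_num) (hint.norm) hBint
        intro t ht
        have hψn : ‖((t:ℂ)*z)‖ = t * r := by
          rw [norm_mul, Complex.norm_real, Real.norm_of_nonneg ht.1]
        rw [norm_mul]
        have := hud _ (hmem t ht)
        rw [hψn] at this
        have hs0 : (0:ℝ) ≤ t * r := mul_nonneg ht.1 hr0
        have hs1 : t * r < 1 := lt_of_le_of_lt (by nlinarith [ht.2]) hr1
        have hpos : (0:ℝ) < 1 - t * r := by linarith
        have : ‖deriv u ((t:ℂ)*z)‖ * ‖z‖ ≤ c * ((1+t*r) ^ (γ-1)/(1-t*r) ^ (γ+1)) * r := by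
          apply mul_le_mul this (le_refl r) hr0
          exact mul_nonneg hc (div_nonneg (Real.rpow_nonneg (by linarith) _)
            (Real.rpow_nonneg (by linarith) _))
        simpa [hB] using this
    _ = c * (1/(2*γ)) * (((1+r)/(1-r)) ^ γ - 1) := hBval

theorem growth_of_harmonic_KKprime (h g : ℂ → ℂ)
    (hh : DifferentiableOn ℂ h (ball (0 : ℂ) 1))
    (hg : DifferentiableOn ℂ g (ball (0 : ℂ) 1))
    (h0 : h 0 = 0) (g0 : g 0 = 0)
    (γ K : ℝ) (hγ : 1 ≤ γ) (hK : 1 ≤ K)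
    (hhd : ∀ ζ ∈ ball (0 : ℂ) 1,
      ‖deriv h ζ‖ ≤ (1 + ‖ζ‖) ^ (γ - 1) / (1 - ‖ζ‖) ^ (γ + 1))
    (hgd : ∀ ζ ∈ ball (0 : ℂ) 1,
      ‖deriv g ζ‖ ≤ (K - 1) / (K + 1) * ((1 + ‖ζ‖) ^ (γ - 1) / (1 - ‖ζ‖) ^ (γ + 1))) :
    ∀ z ∈ ball (0 : ℂ) 1,
      ‖h z + (starRingEnd ℂ) (g z)‖ ≤
        K / (γ * (1 + K)) * (((1 + ‖z‖) / (1 - ‖z‖)) ^ γ - 1) := by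
  intro z hz
  have hγ0 : (0:ℝ) < γ := by linarith
  have hK0 : (0:ℝ) < K + 1 := by linarith
  have bh := radial_bound h hh h0 γ 1 hγ (by norm_num)
    (by intro ζ hζ; simpa using hhd ζ hζ) z hz
  have bg := radial_bound g hg g0 γ ((K-1)/(K+1)) hγ (div_nonneg (by linarith) (by linarith))
    (by intro ζ hζ; simpa using hgd ζ hζ) z hz
  have htri : ‖h z + (starRingEnd ℂ) (g z)‖ ≤ ‖h z‖ + ‖g z‖ := by
    calc ‖h z + (starRingEnd ℂ) (g z)‖ ≤ ‖h z‖ + ‖(starRingEnd ℂ) (g z)‖ := norm_add_le _ _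
      _ = ‖h z‖ + ‖g z‖ := by rw [RCLike.norm_conj]
  set X : ℝ := ((1 + ‖z‖) / (1 - ‖z‖)) ^ γ - 1 with hX
  have key : 1 * (1/(2*γ)) * X + (K-1)/(K+1) * (1/(2*γ)) * X = K / (γ * (1 + K)) * X := by
    field_simp
    ring
  linarith
end

section
/- For the Poisson kernel on a disk of radius r, P_r(ξ, e^{iη}) = (r² - |ξ-z|²)/|re^{iη} - (ξ-z)|², the Wirtinger derivatives with respect to ξ satisfy |∂P_r/∂ξ| ≤ 10/r and |∂P_r/∂ξ̄| ≤ 10/r whenever |ξ - z| ≤ r/2. -/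
open Complex

/-- The Wirtinger derivative `f_ξ = (f_x - i f_y)/2`. -/
noncomputable def wirtingerDz (f : ℂ → ℂ) (z : ℂ) : ℂ :=
  (fderiv ℝ f z 1 - Complex.I * fderiv ℝ f z Complex.I) / 2

/-- The Wirtinger derivative `f_ξ̄ = (f_x + i f_y)/2`. -/
noncomputable def wirtingerDzbar (f : ℂ → ℂ) (z : ℂ) : ℂ :=
  (fderiv ℝ f z 1 + Complex.I * fderiv ℝ f z Complex.I) / 2

set_option linter.unnecessarySeqFocus false in
lemma myNormSqDeriv (x : ℂ) : HasFDerivAt Complex.normSq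
    ((2*x.re) • Complex.reCLM + (2*x.im) • Complex.imCLM) x := by
  have h : (Complex.normSq : ℂ → ℝ) = fun w =>
      Complex.reCLM w * Complex.reCLM w + Complex.imCLM w * Complex.imCLM w := by
    funext w; simp [Complex.normSq_apply]
  rw [h]
  have := ((Complex.reCLM.hasFDerivAt (x := x)).mul (Complex.reCLM.hasFDerivAt (x := x))).add
    ((Complex.imCLM.hasFDerivAt (x := x)).mul (Complex.imCLM.hasFDerivAt (x := x)))
  exact this.congr_fderiv (by ext v <;> simp <;> ring)

lemma myKeyIdentity (c u : ℂ) (r : ℝ) (hc : Complex.normSq c = r^2) :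
    Complex.normSq ((↑(r^2 - Complex.normSq u)) * (c - u) - (↑(Complex.normSq (c-u))) * u)
      = r^2 * (Complex.normSq (c-u))^2 := by
  simp only [Complex.normSq_apply, Complex.sub_re, Complex.sub_im, Complex.mul_re,
    Complex.mul_im, Complex.ofReal_re, Complex.ofReal_im] at *
  linear_combination (((c.re-u.re)^2+(c.im-u.im)^2) * (u.re^2+u.im^2 - r^2)) * hc

lemma myKeyBound (r : ℝ) (hr : 0 < r) (c u v : ℂ) (hc : Complex.normSq c = r^2)
    (hu : ‖u‖ ≤ r/2) (hv : ‖v‖ ≤ 1) :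
    |2*((r^2 - Complex.normSq u) * ((c-u).re*v.re + (c-u).im*v.im)
        - Complex.normSq (c-u) * (u.re*v.re + u.im*v.im)) / (Complex.normSq (c-u))^2|
      ≤ 8/r := by
  set N : ℝ := r^2 - Complex.normSq u with hN
  set D : ℝ := Complex.normSq (c-u) with hD
  set A : ℂ := (↑N) * (c - u) - (↑D) * u with hA
  have hDlow : r^2/4 ≤ D := by
    have h1 : r/2 ≤ ‖c - u‖ := by
      have : ‖c‖ - ‖u‖ ≤ ‖c - u‖ := norm_sub_norm_le c u
      have hcn : ‖c‖ = r := by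
        have := Complex.sq_norm c
        rw [hc] at this
        have h2 := norm_nonneg c
        nlinarith
      linarith
    have h2 : ‖c - u‖^2 = D := by rw [hD, ← Complex.sq_norm]
    nlinarith [norm_nonneg (c - u)]
  have hDpos : 0 < D := by nlinarith
  have habsA : ‖A‖ = r * D := by
    have h1 : Complex.normSq A = r^2 * D^2 := myKeyIdentity c u r hc
    have h2 := Complex.sq_norm A
    have h3 := norm_nonneg A
    nlinarith [mul_pos hr hDpos]
  have hnum : 2*(N * ((c-u).re*v.re + (c-u).im*v.im) - D * (u.re*v.re + u.im*v.im))
      = 2 * ((starRingEnd ℂ A * v).re) := by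
    simp only [hA, Complex.mul_re, Complex.conj_re, Complex.conj_im, Complex.sub_re,
      Complex.sub_im, Complex.mul_im, Complex.ofReal_re, Complex.ofReal_im]
    ring
  have hre : |((starRingEnd ℂ A * v).re)| ≤ r * D := by
    calc |((starRingEnd ℂ A * v).re)| ≤ ‖starRingEnd ℂ A * v‖ :=
          Complex.abs_re_le_norm _
      _ = ‖A‖ * ‖v‖ := by rw [norm_mul, Complex.norm_conj]
      _ ≤ r * D * 1 := by
          apply mul_le_mul (le_of_eq habsA) _ (norm_nonneg v) (by positivity)
          exact hv
      _ = r * D := mul_one _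
  rw [hnum, abs_div]
  rw [div_le_iff₀ (by positivity)]
  have : |2 * (starRingEnd ℂ A * v).re| ≤ 2 * (r * D) := by
    rw [abs_mul]; rw [_root_.abs_two]
    linarith [hre]
  calc |2 * (starRingEnd ℂ A * v).re| ≤ 2 * (r * D) := this
    _ ≤ 8 / r * |D ^ 2| := by
        rw [_root_.abs_of_nonneg (by positivity : (0:ℝ) ≤ D^2)]
        rw [div_mul_eq_mul_div, le_div_iff₀ hr]
        nlinarith

lemma myFinSub (r a b : ℝ) (hr : 0 < r) (ha : |a| ≤ 8/r) (hb : |b| ≤ 8/r) :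
    ‖(((a:ℂ) - Complex.I*(b:ℂ))/2 : ℂ)‖ ≤ 10/r := by
  rw [norm_div]
  have h2 : ‖(2:ℂ)‖ = 2 := by norm_num
  rw [h2]
  have h3 : ‖((a:ℂ) - Complex.I*(b:ℂ))‖ ≤ |a| + |b| := by
    calc ‖(a:ℂ) - Complex.I*(b:ℂ)‖ ≤ ‖(a:ℂ)‖ + ‖Complex.I*(b:ℂ)‖ := norm_sub_le _ _
      _ = |a| + |b| := by
          rw [norm_mul, Complex.norm_I, one_mul]
          simp [Complex.norm_real]
  have h4 : (8:ℝ)/r ≤ 10/r := by gcongr; norm_num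
  have h5 : 0 < 8/r := by positivity
  linarith

lemma myFinAdd (r a b : ℝ) (hr : 0 < r) (ha : |a| ≤ 8/r) (hb : |b| ≤ 8/r) :
    ‖(((a:ℂ) + Complex.I*(b:ℂ))/2 : ℂ)‖ ≤ 10/r := by
  have := myFinSub r a (-b) hr ha (by rwa [abs_neg])
  rw [Complex.ofReal_neg, mul_neg, sub_neg_eq_add] at this
  exact this


theorem poisson_kernel_wirtinger_bound (z : ℂ) (r η : ℝ) (hr : 0 < r) :
    ∀ ξ : ℂ, ‖ξ - z‖ ≤ r / 2 →
      ‖wirtingerDz (fun w =>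
          (((r ^ 2 - ‖w - z‖ ^ 2) / ‖(r : ℂ) * Complex.exp (η * Complex.I) - (w - z)‖ ^ 2 : ℝ) : ℂ)) ξ‖
          ≤ 10 / r ∧
      ‖wirtingerDzbar (fun w =>
          (((r ^ 2 - ‖w - z‖ ^ 2) / ‖(r : ℂ) * Complex.exp (η * Complex.I) - (w - z)‖ ^ 2 : ℝ) : ℂ)) ξ‖
          ≤ 10 / r := by
  intro ξ hξ
  set c : ℂ := (r:ℂ) * Complex.exp (η * Complex.I) with hcdef
  set u : ℂ := ξ - z with hudef
  have hcn : Complex.normSq c = r^2 := by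
    rw [← Complex.sq_norm]
    rw [hcdef, norm_mul, Complex.norm_exp]
    simp [Complex.norm_real, abs_of_pos hr]
  have hD0 : Complex.normSq (c - u) ≠ 0 := by
    have h1 : r/2 ≤ ‖c - u‖ := by
      have h2 : ‖c‖ - ‖u‖ ≤ ‖c - u‖ := norm_sub_norm_le c u
      have hcn2 : ‖c‖ = r := by
        have := Complex.sq_norm c
        rw [hcn] at this
        have h2 := norm_nonneg c
        nlinarith
      linarith
    intro h
    rw [Complex.normSq_eq_norm_sq] at h
    have : ‖c - u‖ = 0 := by nlinarith [norm_nonneg (c - u)]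
    rw [this] at h1; linarith
  have hsub : HasFDerivAt (fun w : ℂ => w - z) (ContinuousLinearMap.id ℝ ℂ) ξ :=
    (hasFDerivAt_id ξ).sub_const z
  have hN : HasFDerivAt (fun w : ℂ => r^2 - Complex.normSq (w - z))
      (-(((2*u.re) • Complex.reCLM + (2*u.im) • Complex.imCLM).comp (ContinuousLinearMap.id ℝ ℂ))) ξ :=
    (((myNormSqDeriv u).comp ξ hsub)).const_sub (r^2)
  have hin2 : HasFDerivAt (fun w : ℂ => c - (w - z)) (-(ContinuousLinearMap.id ℝ ℂ)) ξ :=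
    hsub.const_sub c
  have hDd : HasFDerivAt (fun w : ℂ => Complex.normSq (c - (w - z)))
      (((2*(c-u).re) • Complex.reCLM + (2*(c-u).im) • Complex.imCLM).comp
        (-(ContinuousLinearMap.id ℝ ℂ))) ξ :=
    (myNormSqDeriv (c - u)).comp ξ hin2
  have hinv := ((hasFDerivAt_inv' (𝕜 := ℝ) hD0).comp ξ hDd)
  have hg := hN.mul hinv
  have hfr := (Complex.ofRealCLM.hasFDerivAt).comp ξ hg
  have hfeq : (fun w : ℂ =>
      (((r ^ 2 - ‖w - z‖ ^ 2) / ‖c - (w - z)‖ ^ 2 : ℝ) : ℂ)) =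
      (⇑Complex.ofRealCLM ∘ ((fun y : ℂ =>
        r ^ 2 - Complex.normSq (y - z)) * (Inv.inv ∘ fun w : ℂ => Complex.normSq (c - (w - z))))) := by
    funext w
    simp [← Complex.sq_norm, div_eq_mul_inv, Function.comp]
  have hfd := hfr.fderiv
  rw [← hfeq] at hfd
  have hu2 : ‖u‖ ≤ r/2 := hξ
  have key : ∀ v : ℂ, ‖v‖ ≤ 1 →
      |(r ^ 2 - Complex.normSq u) *
          -((Complex.normSq (c - u))⁻¹ * (2 * (c - u).re * -v.re + 2 * (c - u).im * -v.im) *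
            (Complex.normSq (c - u))⁻¹) +
        (Complex.normSq (c - u))⁻¹ * -(2 * u.re * v.re + 2 * u.im * v.im)| ≤ 8 / r := by
    intro v hv
    have hb := myKeyBound r hr c u v hcn hu2 hv
    have heq : (r ^ 2 - Complex.normSq u) *
          -((Complex.normSq (c - u))⁻¹ * (2 * (c - u).re * -v.re + 2 * (c - u).im * -v.im) *
            (Complex.normSq (c - u))⁻¹) +
        (Complex.normSq (c - u))⁻¹ * -(2 * u.re * v.re + 2 * u.im * v.im)
        = 2*((r^2 - Complex.normSq u) * ((c-u).re*v.re + (c-u).im*v.im)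
            - Complex.normSq (c-u) * (u.re*v.re + u.im*v.im)) / (Complex.normSq (c-u))^2 := by
      field_simp
      ring
    rw [heq]
    exact hb
  have k1 := key 1 (by norm_num)
  have kI := key Complex.I (by simp)
  constructor
  · rw [wirtingerDz, hfd]
    simp only [ContinuousLinearMap.coe_comp', Function.comp_apply, ContinuousLinearMap.add_apply,
      ContinuousLinearMap.smul_apply, ContinuousLinearMap.neg_apply, ContinuousLinearMap.coe_id',
      id_eq, ContinuousLinearMap.mulLeftRight_apply, Complex.ofRealCLM_apply, smul_eq_mul,
      Complex.neg_re, Complex.neg_im, Complex.reCLM_apply, Complex.imCLM_apply]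
    exact myFinSub r _ _ hr k1 kI
  · rw [wirtingerDzbar, hfd]
    simp only [ContinuousLinearMap.coe_comp', Function.comp_apply, ContinuousLinearMap.add_apply,
      ContinuousLinearMap.smul_apply, ContinuousLinearMap.neg_apply, ContinuousLinearMap.coe_id',
      id_eq, ContinuousLinearMap.mulLeftRight_apply, Complex.ofRealCLM_apply, smul_eq_mul,
      Complex.neg_re, Complex.neg_im, Complex.reCLM_apply, Complex.imCLM_apply]
    exact myFinAdd r _ _ hr k1 kI
end
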